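/- arXiv:1011.6610 — 4 statements merged into one kernel-verified Lean document; each statement's English description precedes it below -/
import Mathlib

section
/- Let $l_0 \geq l_1 \geq \cdots \geq l_s$ be positive integers and let $\mathcal{F}$ be the set of functions $f\colon\{1,\dots,l_0\}\to\{0,1,\dots,s\}$ such that for every $1 \leq i \leq s$, $\#\{r : f(r) \geq i\} \leq l_i$. Then $\#\mathcal{F} \leq \prod_{i=1}^s (e\, l_{i-1}/l_i)^{l_i}$. -/
open Finset

private lemma sum_choose_le_exp (m k : ℕ) (hk : 1 ≤ k) (hkm : k ≤ m) :
    (∑ j ∈ Finset.range (k + 1), (m.choose j : ℝ)) ≤ (Real.exp 1 * m / k) ^ k := by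
  have hm : 0 < (m : ℝ) := by exact_mod_cast lt_of_lt_of_le hk hkm
  have hk' : 0 < (k : ℝ) := by exact_mod_cast hk
  set x : ℝ := (k : ℝ) / m with hxdef
  have hx0 : 0 < x := div_pos hk' hm
  have hx1 : x ≤ 1 := by rw [div_le_one hm]; exact_mod_cast hkm
  have key : (∑ j ∈ Finset.range (k + 1), (m.choose j : ℝ)) * x ^ k ≤ Real.exp 1 ^ k := by
    calc (∑ j ∈ Finset.range (k + 1), (m.choose j : ℝ)) * x ^ k
        = ∑ j ∈ Finset.range (k + 1), (m.choose j : ℝ) * x ^ k := by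
          rw [Finset.sum_mul]
      _ ≤ ∑ j ∈ Finset.range (k + 1), x ^ j * (m.choose j : ℝ) := by
          apply Finset.sum_le_sum
          intro j hj
          rw [Finset.mem_range] at hj
          rw [mul_comm]
          apply mul_le_mul_of_nonneg_right _ (by positivity)
          exact pow_le_pow_of_le_one hx0.le hx1 (by omega)
      _ ≤ ∑ j ∈ Finset.range (m + 1), x ^ j * (m.choose j : ℝ) := by
          apply Finset.sum_le_sum_of_subset_of_nonneg
          · exact Finset.range_subset_range.2 (by omega)
          · intro j _ _; positivity
      _ = (x + 1) ^ m := by rw [add_pow]; simp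
      _ ≤ Real.exp x ^ m := by
          apply pow_le_pow_left₀ (by positivity)
          linarith [Real.add_one_le_exp x]
      _ = Real.exp (x * m) := by
          rw [mul_comm, Real.exp_nat_mul, ]
      _ = Real.exp k := by
          congr 1
          rw [hxdef]; field_simp [hm.ne']
      _ = Real.exp 1 ^ k := by
          rw [← Real.exp_nat_mul, mul_one]
  have hxk : 0 < x ^ k := pow_pos hx0 k
  have hrw : Real.exp 1 * m / k = Real.exp 1 / x := by
    rw [hxdef]; field_simp
  rw [hrw, div_pow, le_div_iff₀ hxk]
  exact key

private lemma card_small_subsets {α : Type*} [DecidableEq α] (S : Finset α) (k : ℕ) :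
    (S.powerset.filter (fun A => A.card ≤ k)).card ≤
      ∑ j ∈ Finset.range (k + 1), S.card.choose j := by
  have heq : S.powerset.filter (fun A => A.card ≤ k) =
      (Finset.range (k + 1)).biUnion (fun j => Finset.powersetCard j S) := by
    ext A
    simp only [Finset.mem_filter, Finset.mem_powerset, Finset.mem_biUnion, Finset.mem_range,
      Finset.mem_powersetCard]
    constructor
    · rintro ⟨h1, h2⟩; exact ⟨A.card, by omega, h1, rfl⟩
    · rintro ⟨j, hj, h1, rfl⟩; exact ⟨h1, by omega⟩
  rw [heq]
  calc ((Finset.range (k + 1)).biUnion (fun j => Finset.powersetCard j S)).card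
      ≤ ∑ j ∈ Finset.range (k + 1), (Finset.powersetCard j S).card :=
        Finset.card_biUnion_le
    _ = ∑ j ∈ Finset.range (k + 1), S.card.choose j := by
        simp [Finset.card_powersetCard]

private lemma aux_count (l : ℕ → ℕ) (S : ℕ) :
    ∀ s, s ≤ S →
    ((Finset.univ.filter (fun f : Fin (l 0) → Fin (S + 1) =>
        (∀ r, (f r : ℕ) ≤ s) ∧
        ∀ i : ℕ, 1 ≤ i → i ≤ s →
          ((Finset.univ.filter (fun r : Fin (l 0) => i ≤ (f r : ℕ))).card ≤ l i))).card : ℝ)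
      ≤ ∏ i ∈ Finset.Icc 1 s, (∑ j ∈ Finset.range (l i + 1), ((l (i - 1)).choose j : ℝ)) := by
  intro s
  induction s with
  | zero =>
    intro _
    rw [Finset.Icc_eq_empty (by omega), Finset.prod_empty]
    have h1 : (Finset.univ.filter (fun f : Fin (l 0) → Fin (S + 1) =>
        (∀ r, (f r : ℕ) ≤ 0) ∧
        ∀ i : ℕ, 1 ≤ i → i ≤ 0 →
          ((Finset.univ.filter (fun r : Fin (l 0) => i ≤ (f r : ℕ))).card ≤ l i))).card ≤ 1 := by
      apply Finset.card_le_one.2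
      intro f hf g hg
      simp only [Finset.mem_filter] at hf hg
      funext r
      have := hf.2.1 r
      have := hg.2.1 r
      exact Fin.ext (by omega)
    exact_mod_cast h1
  | succ s ih =>
    intro hsS
    have ihs := ih (by omega)
    set Fbig := Finset.univ.filter (fun f : Fin (l 0) → Fin (S + 1) =>
        (∀ r, (f r : ℕ) ≤ s + 1) ∧
        ∀ i : ℕ, 1 ≤ i → i ≤ s + 1 →
          ((Finset.univ.filter (fun r : Fin (l 0) => i ≤ (f r : ℕ))).card ≤ l i)) with hFbig
    set Fsm := Finset.univ.filter (fun f : Fin (l 0) → Fin (S + 1) =>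
        (∀ r, (f r : ℕ) ≤ s) ∧
        ∀ i : ℕ, 1 ≤ i → i ≤ s →
          ((Finset.univ.filter (fun r : Fin (l 0) => i ≤ (f r : ℕ))).card ≤ l i)) with hFsm
    -- truncation map
    set Φ : (Fin (l 0) → Fin (S + 1)) → (Fin (l 0) → Fin (S + 1)) :=
      fun f r => if (f r : ℕ) ≤ s then f r else ⟨s, by omega⟩ with hΦ
    have hΦval : ∀ f r, ((Φ f r : ℕ)) = min (f r : ℕ) s := by
      intro f r
      simp only [hΦ]
      split_ifs with h
      · omega
      · simp; omega
    have hmaps : ∀ f ∈ Fbig, Φ f ∈ Fsm := by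
      intro f hf
      rw [hFbig, Finset.mem_filter] at hf
      rw [hFsm, Finset.mem_filter]
      refine ⟨Finset.mem_univ _, fun r => by rw [hΦval]; omega, fun i hi1 his => ?_⟩
      have hset : (Finset.univ.filter (fun r : Fin (l 0) => i ≤ ((Φ f) r : ℕ)))
          = Finset.univ.filter (fun r : Fin (l 0) => i ≤ (f r : ℕ)) := by
        apply Finset.filter_congr
        intro r _
        rw [hΦval]
        constructor <;> intro <;> omega
      rw [hset]
      exact hf.2.2 i hi1 (by omega)
    set B : ℕ := ∑ j ∈ Finset.range (l (s + 1) + 1), (l s).choose j with hB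
    have hfiber : ∀ g ∈ Fsm, (Fbig.filter (fun f => Φ f = g)).card ≤ B := by
      intro g hg
      rw [hFsm, Finset.mem_filter] at hg
      -- the set {r : g r = s} has card ≤ l s
      have hgs : (Finset.univ.filter (fun r : Fin (l 0) => s ≤ (g r : ℕ))).card ≤ l s := by
        rcases Nat.eq_zero_or_pos s with hs0 | hs0
        · subst hs0
          calc _ ≤ (Finset.univ : Finset (Fin (l 0))).card := Finset.card_filter_le _ _
            _ = l 0 := by simp
        · exact hg.2.2 s hs0 le_rfl
      set T := ((Finset.univ.filter (fun r : Fin (l 0) => s ≤ (g r : ℕ))).powerset.filter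
          (fun A => A.card ≤ l (s + 1))) with hT
      have hinj : (Fbig.filter (fun f => Φ f = g)).card ≤ T.card := by
        apply Finset.card_le_card_of_injOn
          (fun f => Finset.univ.filter (fun r : Fin (l 0) => (f r : ℕ) = s + 1))
        · intro f hf
          rw [Finset.mem_coe, Finset.mem_filter] at hf
          obtain ⟨hf1, hf2⟩ := hf
          rw [hFbig, Finset.mem_filter] at hf1
          rw [hT, Finset.mem_coe, Finset.mem_filter, Finset.mem_powerset]
          constructor
          · intro r hr
            rw [Finset.mem_filter] at hr
            rw [Finset.mem_filter]
            refine ⟨Finset.mem_univ _, ?_⟩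
            have := hΦval f r
            rw [hf2] at this
            omega
          · calc (Finset.univ.filter (fun r : Fin (l 0) => (f r : ℕ) = s + 1)).card
                ≤ (Finset.univ.filter (fun r : Fin (l 0) => s + 1 ≤ (f r : ℕ))).card := by
                  apply Finset.card_le_card
                  intro r hr
                  rw [Finset.mem_filter] at hr ⊢
                  exact ⟨hr.1, by omega⟩
              _ ≤ l (s + 1) := hf1.2.2 (s + 1) (by omega) le_rfl
        · intro f1 hf1 f2 hf2 heq
          simp only [Finset.coe_filter, Set.mem_setOf_eq] at hf1 hf2
          have h1 := hf1.2
          have h2 := hf2.2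
          funext r
          have hmem : r ∈ Finset.univ.filter (fun r : Fin (l 0) => (f1 r : ℕ) = s + 1) ↔
              r ∈ Finset.univ.filter (fun r : Fin (l 0) => (f2 r : ℕ) = s + 1) :=
            Finset.ext_iff.1 heq r
          simp only [Finset.mem_filter, Finset.mem_univ, true_and] at hmem
          have hv1 := congrFun h1 r
          have hv2 := congrFun h2 r
          have hΦ1 := hΦval f1 r
          have hΦ2 := hΦval f2 r
          rw [hv1] at hΦ1
          rw [hv2] at hΦ2
          rw [hFbig, Finset.mem_filter] at *
          have hb1 : (f1 r : ℕ) ≤ s + 1 := hf1.1.2.1 r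
          have hb2 : (f2 r : ℕ) ≤ s + 1 := hf2.1.2.1 r
          apply Fin.ext
          omega
      have hTcard : T.card ≤ B := by
        calc T.card ≤ ∑ j ∈ Finset.range (l (s + 1) + 1),
            ((Finset.univ.filter (fun r : Fin (l 0) => s ≤ (g r : ℕ))).card).choose j :=
              card_small_subsets _ _
          _ ≤ B := Finset.sum_le_sum (fun j _ => Nat.choose_le_choose j hgs)
      omega
    have hcount : Fbig.card ≤ Fsm.card * B := by
      rw [Finset.card_eq_sum_card_fiberwise hmaps]
      calc ∑ g ∈ Fsm, (Fbig.filter (fun f => Φ f = g)).card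
          ≤ ∑ _g ∈ Fsm, B := Finset.sum_le_sum hfiber
        _ = Fsm.card * B := by rw [Finset.sum_const, smul_eq_mul]
    have hprod : (∏ i ∈ Finset.Icc 1 (s + 1),
        (∑ j ∈ Finset.range (l i + 1), ((l (i - 1)).choose j : ℝ)))
        = (∏ i ∈ Finset.Icc 1 s,
          (∑ j ∈ Finset.range (l i + 1), ((l (i - 1)).choose j : ℝ))) * (B : ℝ) := by
      rw [Finset.prod_Icc_succ_top (by omega : 1 ≤ s + 1)]
      congr 1
      rw [hB]
      push_cast
      simp
    rw [hprod]
    have hBcast : (Fbig.card : ℝ) ≤ (Fsm.card : ℝ) * (B : ℝ) := by exact_mod_cast hcount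
    refine le_trans hBcast ?_
    apply mul_le_mul_of_nonneg_right ihs (by positivity)

/-- Combinatorial lemma: if `l 0 ≥ l 1 ≥ … ≥ l s` are positive integers, the number of
functions `f : {1,…,l 0} → {0,1,…,s}` such that `#{r : f r ≥ i} ≤ l i` for all `1 ≤ i ≤ s`
is at most `∏_{i=1}^s (e l_{i-1}/l_i)^{l_i}`. -/
theorem stmt0 (s : ℕ) (hs : 1 ≤ s) (l : ℕ → ℕ) (hpos : ∀ i ≤ s, 0 < l i)
    (hmono : ∀ i j, i ≤ j → j ≤ s → l j ≤ l i) :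
    ((Finset.univ.filter (fun f : Fin (l 0) → Fin (s + 1) =>
        ∀ i : ℕ, 1 ≤ i → i ≤ s →
          ((Finset.univ.filter (fun r : Fin (l 0) => i ≤ (f r : ℕ))).card ≤ l i))).card : ℝ)
      ≤ ∏ i ∈ Finset.Icc 1 s, (Real.exp 1 * l (i - 1) / l i) ^ (l i) := by
  have heq : (Finset.univ.filter (fun f : Fin (l 0) → Fin (s + 1) =>
        ∀ i : ℕ, 1 ≤ i → i ≤ s →
          ((Finset.univ.filter (fun r : Fin (l 0) => i ≤ (f r : ℕ))).card ≤ l i)))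
      = (Finset.univ.filter (fun f : Fin (l 0) → Fin (s + 1) =>
        (∀ r, (f r : ℕ) ≤ s) ∧
        ∀ i : ℕ, 1 ≤ i → i ≤ s →
          ((Finset.univ.filter (fun r : Fin (l 0) => i ≤ (f r : ℕ))).card ≤ l i))) := by
    apply Finset.filter_congr
    intro f _
    constructor
    · intro h
      exact ⟨fun r => by omega, h⟩
    · intro h
      exact h.2
  rw [heq]
  refine le_trans (aux_count l s s le_rfl) ?_
  apply Finset.prod_le_prod
  · intro i _; positivity
  · intro i hi
    rw [Finset.mem_Icc] at hi
    have h1 : 1 ≤ l i := hpos i hi.2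
    have h2 : l i ≤ l (i - 1) := hmono (i - 1) i (by omega) hi.2
    exact sum_choose_le_exp (l (i - 1)) (l i) h1 h2
end

section
/- Let $X_1,\dots,X_n$ be random variables such that for every subset $\{i_1 < \cdots < i_k\} \subseteq \{1,\dots,n\}$ and every $t > 0$, $\mathbb{P}(|X_{i_1}| \geq t, \dots, |X_{i_k}| \geq t) \leq 2^k \exp(-kt/C_0)$. Then $\mathbb{P}(X_k^* \geq t) \leq (2en/k)^k \exp(-kt/C_0)$, where $X_k^*$ denotes the $k$-th largest value among $|X_1|, \dots, |X_n|$. In particular, $\mathbb{P}(X_k^* \geq t) \leq \exp(-kt/(2C_0))$ whenever $t \geq 2C_0(1 + \log(2en/k))$. -/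
open MeasureTheory

noncomputable def orderStat {n : ℕ} (x : Fin n → ℝ) (k : ℕ) : ℝ :=
  ((Finset.univ.val.map fun i : Fin n => |x i|).sort (· ≤ ·)).getD (n - k) 0

-- combinatorial lemma
lemma orderStat_subset {n : ℕ} (x : Fin n → ℝ) {k : ℕ} (hk : 1 ≤ k) (hkn : k ≤ n)
    {t : ℝ} (h : t ≤ orderStat x k) :
    ∃ S : Finset (Fin n), S.card = k ∧ ∀ i ∈ S, t ≤ |x i| := by
  classical
  set M : Multiset ℝ := Finset.univ.val.map fun i : Fin n => |x i| with hM
  set l : List ℝ := M.sort (· ≤ ·) with hl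
  have hlen : l.length = n := by
    simp [hl, hM, Multiset.length_sort]
  have hsorted : l.Pairwise (· ≤ ·) := Multiset.pairwise_sort _ _
  have hnk : n - k < n := by omega
  have hget : t ≤ l.get ⟨n - k, by omega⟩ := by
    have := h
    rwa [orderStat, ← hM, ← hl, List.getD_eq_getElem l 0 (by omega)] at this
  have hge : ∀ j (hj : j < n), n - k ≤ j → t ≤ l.get ⟨j, by omega⟩ := by
    intro j hj hnkj
    exact hget.trans (hsorted.rel_get_of_le (by simpa using hnkj))
  -- count elements ≥ t
  have hdrop : ∀ a ∈ l.drop (n - k), t ≤ a := by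
    intro a ha
    rw [List.mem_iff_getElem] at ha
    obtain ⟨i, hi, rfl⟩ := ha
    rw [List.length_drop, hlen] at hi
    rw [List.getElem_drop]
    exact hge _ (by omega) (by omega)
  have hcount : k ≤ l.countP (fun a => decide (t ≤ a)) := by
    have h1 : (l.drop (n - k)).countP (fun a => decide (t ≤ a)) = (l.drop (n - k)).length := by
      rw [List.countP_eq_length]
      intro a ha; simpa using hdrop a ha
    have h2 : (l.drop (n - k)).length = k := by
      rw [List.length_drop, hlen]; omega
    calc k = (l.drop (n - k)).countP (fun a => decide (t ≤ a)) := by rw [h1, h2]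
      _ ≤ l.countP (fun a => decide (t ≤ a)) := by
          conv_rhs => rw [← List.take_append_drop (n - k) l]
          rw [List.countP_append]; omega
  have hcard : k ≤ (Finset.univ.filter fun i : Fin n => t ≤ |x i|).card := by
    have : Multiset.countP (fun a => t ≤ a) M = l.countP (fun a => decide (t ≤ a)) := by
      conv_lhs => rw [← Multiset.sort_eq M (· ≤ ·)]
      rfl
    have h3 : (Finset.univ.filter fun i : Fin n => t ≤ |x i|).card
        = Multiset.countP (fun a => t ≤ a) M := by
      rw [hM, Multiset.countP_map]
      rfl
    omega
  obtain ⟨S, hS, hScard⟩ := Finset.exists_subset_card_eq hcard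
  exact ⟨S, hScard, fun i hi => (Finset.mem_filter.mp (hS hi)).2⟩

lemma choose_le_en_pow {n k : ℕ} (hk : 1 ≤ k) :
    (n.choose k : ℝ) ≤ (Real.exp 1 * n / k) ^ k := by
  have hkpos : (0 : ℝ) < k := by positivity
  have h1 : (n.choose k : ℝ) ≤ (n : ℝ) ^ k / k.factorial := Nat.choose_le_pow_div k n
  have h2 : (k : ℝ) ^ k / k.factorial ≤ Real.exp k :=
    Real.pow_div_factorial_le_exp _ (by positivity) k
  have hfac : (0 : ℝ) < k.factorial := by positivity
  calc (n.choose k : ℝ) ≤ (n : ℝ) ^ k / k.factorial := h1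
    _ = ((n : ℝ) / k) ^ k * ((k : ℝ) ^ k / k.factorial) := by
        rw [div_pow]; field_simp
    _ ≤ ((n : ℝ) / k) ^ k * Real.exp k := by
        apply mul_le_mul_of_nonneg_left h2 (by positivity)
    _ = (Real.exp 1 * n / k) ^ k := by
        rw [show Real.exp (k : ℝ) = Real.exp 1 ^ k by rw [← Real.exp_nat_mul, mul_one],
          ← mul_pow]
        congr 1; ring

/-- If joint tails satisfy `P(|X_{i₁}| ≥ t, …, |X_{i_k}| ≥ t) ≤ 2^k exp(-kt/C₀)` for
every `k`-element subset, then `P(X_k^* ≥ t) ≤ (2en/k)^k exp(-kt/C₀)`; in particular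
`P(X_k^* ≥ t) ≤ exp(-kt/(2C₀))` for `t ≥ 2C₀(1 + log(2en/k))`. -/
theorem stmt5 {Ω : Type*} [MeasurableSpace Ω] (μ : Measure Ω) [IsProbabilityMeasure μ]
    {n : ℕ} (X : Ω → Fin n → ℝ) (hX : Measurable X)
    (C0 : ℝ) (hC0 : 1 ≤ C0) (k : ℕ) (hk : 1 ≤ k) (hkn : k ≤ n)
    (hjoint : ∀ S : Finset (Fin n), S.card = k → ∀ t : ℝ, 0 < t →
      μ {ω | ∀ i ∈ S, t ≤ |X ω i|}
        ≤ ENNReal.ofReal (2 ^ k * Real.exp (-(k : ℝ) * t / C0))) :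
    (∀ t : ℝ, 0 < t →
      μ {ω | t ≤ orderStat (X ω) k}
        ≤ ENNReal.ofReal ((2 * Real.exp 1 * n / k) ^ k * Real.exp (-(k : ℝ) * t / C0))) ∧
    (∀ t : ℝ, 2 * C0 * (1 + Real.log (2 * Real.exp 1 * n / k)) ≤ t →
      μ {ω | t ≤ orderStat (X ω) k}
        ≤ ENNReal.ofReal (Real.exp (-(k : ℝ) * t / (2 * C0)))) := by
  classical
  have hkpos : (0 : ℝ) < k := by positivity
  have he1 : (1 : ℝ) ≤ Real.exp 1 := Real.one_le_exp (by norm_num)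
  have hnk : (k : ℝ) ≤ n := by exact_mod_cast hkn
  have h2en : (1 : ℝ) ≤ 2 * Real.exp 1 * n / k := by
    rw [le_div_iff₀ hkpos]; nlinarith
  have part1 : ∀ t : ℝ, 0 < t →
      μ {ω | t ≤ orderStat (X ω) k}
        ≤ ENNReal.ofReal ((2 * Real.exp 1 * n / k) ^ k * Real.exp (-(k : ℝ) * t / C0)) := by
    intro t ht
    have hsub : {ω | t ≤ orderStat (X ω) k} ⊆
        ⋃ S ∈ Finset.powersetCard k (Finset.univ : Finset (Fin n)),
          {ω | ∀ i ∈ S, t ≤ |X ω i|} := by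
      intro ω hω
      obtain ⟨S, hScard, hS⟩ := orderStat_subset (X ω) hk hkn hω
      exact Set.mem_biUnion (Finset.mem_powersetCard.mpr ⟨Finset.subset_univ _, hScard⟩) hS
    calc μ {ω | t ≤ orderStat (X ω) k}
        ≤ μ (⋃ S ∈ Finset.powersetCard k (Finset.univ : Finset (Fin n)),
            {ω | ∀ i ∈ S, t ≤ |X ω i|}) := measure_mono hsub
      _ ≤ ∑ S ∈ Finset.powersetCard k (Finset.univ : Finset (Fin n)),
            μ {ω | ∀ i ∈ S, t ≤ |X ω i|} := measure_biUnion_finset_le _ _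
      _ ≤ ∑ S ∈ Finset.powersetCard k (Finset.univ : Finset (Fin n)),
            ENNReal.ofReal (2 ^ k * Real.exp (-(k : ℝ) * t / C0)) := by
          apply Finset.sum_le_sum
          intro S hS
          exact hjoint S (Finset.mem_powersetCard.mp hS).2 t ht
      _ = (n.choose k : ENNReal) * ENNReal.ofReal (2 ^ k * Real.exp (-(k : ℝ) * t / C0)) := by
          rw [Finset.sum_const, Finset.card_powersetCard, Finset.card_univ, Fintype.card_fin,
            nsmul_eq_mul]
      _ = ENNReal.ofReal ((n.choose k : ℝ) * (2 ^ k * Real.exp (-(k : ℝ) * t / C0))) := by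
          rw [← ENNReal.ofReal_natCast, ← ENNReal.ofReal_mul (by positivity)]
      _ ≤ ENNReal.ofReal ((2 * Real.exp 1 * n / k) ^ k * Real.exp (-(k : ℝ) * t / C0)) := by
          apply ENNReal.ofReal_le_ofReal
          have h1 := choose_le_en_pow (n := n) hk
          have h2 : (2 * Real.exp 1 * n / k) ^ k
              = 2 ^ k * (Real.exp 1 * n / k) ^ k := by
            rw [← mul_pow]; ring_nf
          rw [h2, ← mul_assoc]
          apply mul_le_mul_of_nonneg_right _ (Real.exp_pos _).le
          rw [mul_comm ((2:ℝ)^k)]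
          exact mul_le_mul_of_nonneg_right h1 (by positivity)
  refine ⟨part1, fun t ht => ?_⟩
  set L := Real.log (2 * Real.exp 1 * n / k) with hL
  have hLpos : 0 ≤ L := Real.log_nonneg h2en
  have hC0pos : (0 : ℝ) < C0 := lt_of_lt_of_le one_pos hC0
  have htpos : 0 < t := lt_of_lt_of_le (by nlinarith) ht
  refine (part1 t htpos).trans (ENNReal.ofReal_le_ofReal ?_)
  have hrw : (2 * Real.exp 1 * n / k) ^ k * Real.exp (-(k : ℝ) * t / C0)
      = Real.exp ((k : ℝ) * L + -(k : ℝ) * t / C0) := by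
    rw [Real.exp_add, Real.exp_nat_mul, hL, Real.exp_log (by linarith)]
  rw [hrw, Real.exp_le_exp]
  have hkk : (1 : ℝ) ≤ k := by exact_mod_cast hk
  have key : (k : ℝ) * L * (2 * C0) ≤ k * t := by
    nlinarith [mul_le_mul_of_nonneg_left ht (le_of_lt hkpos)]
  rw [← sub_nonneg]
  have heq : -(k : ℝ) * t / (2 * C0) - ((k : ℝ) * L + -(k : ℝ) * t / C0)
      = ((k : ℝ) * t - (k : ℝ) * L * (2 * C0)) / (2 * C0) := by
    field_simp; ring
  rw [heq]
  exact div_nonneg (by linarith) (by linarith)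
end

section
/- For any $n \geq 1$ and $r > 2$, $\sum_{k=0}^{\lfloor \log_2 n \rfloor} 2^k \log^r(en 2^{-k}) \leq (Cr)^r n$ for a universal constant $C$. -/
open Real Finset

lemma aux1 (r : ℝ) (hr : 0 < r) (i : ℕ) (hi : 1 ≤ i) :
    (i : ℝ) ^ r ≤ (2 * r / (Real.exp 1 * Real.log 2)) ^ r * Real.sqrt 2 ^ i := by
  have hlog2 : 0 < Real.log 2 := Real.log_pos one_lt_two
  set b : ℝ := 2 * r / Real.log 2 with hbdef
  have hb : 0 < b := by positivity
  have hx : (1:ℝ) ≤ (i:ℝ) := by exact_mod_cast hi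
  have hxpos : (0:ℝ) < i := by linarith
  have h1 : Real.log i ≤ (i:ℝ) / b - 1 + Real.log b := by
    have h2 := Real.log_le_sub_one_of_pos (show (0:ℝ) < (i:ℝ)/b by positivity)
    have h3 : Real.log ((i:ℝ)/b) = Real.log i - Real.log b :=
      Real.log_div (ne_of_gt hxpos) (ne_of_gt hb)
    linarith
  have hxr : (i:ℝ) ^ r = Real.exp (Real.log i * r) := Real.rpow_def_of_pos hxpos r
  have hrb : r * ((i:ℝ)/b) = Real.log 2 / 2 * i := by
    rw [hbdef]; field_simp
  have hmono : Real.log i * r ≤ Real.log 2 / 2 * i + r * (Real.log b - 1) := by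
    nlinarith [mul_le_mul_of_nonneg_left h1 hr.le]
  have hsq : Real.sqrt 2 = Real.exp (Real.log 2 / 2) := by
    rw [show Real.log 2 / 2 = Real.log 2 * (1/2) by ring, ← Real.rpow_def_of_pos two_pos,
      ← Real.sqrt_eq_rpow]
  have hexp : Real.exp (Real.log 2 / 2 * i + r * (Real.log b - 1))
      = Real.sqrt 2 ^ i * (2 * r / (Real.exp 1 * Real.log 2)) ^ r := by
    rw [Real.exp_add]
    congr 1
    · rw [mul_comm (Real.log 2 / 2) (i:ℝ), Real.exp_nat_mul, ← hsq]
    · have hbe : 2 * r / (Real.exp 1 * Real.log 2) = b / Real.exp 1 := by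
        rw [hbdef]; field_simp
      rw [hbe, Real.rpow_def_of_pos (by positivity)]
      congr 1
      rw [Real.log_div (ne_of_gt hb) (Real.exp_pos 1).ne', Real.log_exp]
      ring
  calc (i:ℝ) ^ r = Real.exp (Real.log i * r) := hxr
    _ ≤ Real.exp (Real.log 2 / 2 * i + r * (Real.log b - 1)) := Real.exp_le_exp.mpr hmono
    _ = Real.sqrt 2 ^ i * (2 * r / (Real.exp 1 * Real.log 2)) ^ r := hexp
    _ = (2 * r / (Real.exp 1 * Real.log 2)) ^ r * Real.sqrt 2 ^ i := by ring

set_option maxHeartbeats 1600000 in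
/-- For `n ≥ 1` and `r > 2`, `∑_{k=0}^{⌊log₂ n⌋} 2^k log^r(e n 2^{-k}) ≤ (Cr)^r n`
for a universal constant `C`. -/
theorem stmt6 : ∃ C : ℝ, 0 < C ∧ ∀ n : ℕ, 1 ≤ n → ∀ r : ℝ, 2 < r →
    ∑ k ∈ Finset.range (Nat.log 2 n + 1),
        (2 : ℝ) ^ k * (Real.log (Real.exp 1 * n / 2 ^ k)) ^ r
      ≤ (C * r) ^ r * n := by
  refine ⟨7, by norm_num, fun n hn r hr => ?_⟩
  have hr0 : (0:ℝ) < r := by linarith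
  set m := Nat.log 2 n with hm
  have hn0 : n ≠ 0 := by omega
  have h2m : (2:ℕ)^m ≤ n := Nat.pow_log_le_self 2 hn0
  have hn2m : n < 2^(m+1) := Nat.lt_pow_succ_log_self one_lt_two n
  set q : ℝ := (Real.sqrt 2)⁻¹ with hq
  have hs2 : Real.sqrt 2 * Real.sqrt 2 = 2 := Real.mul_self_sqrt two_pos.le
  have hs2pos : (0:ℝ) < Real.sqrt 2 := Real.sqrt_pos.mpr two_pos
  have hs2gt : (1.4:ℝ) < Real.sqrt 2 := by nlinarith
  have hq0 : 0 < q := by positivity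
  have hqs1 : q * Real.sqrt 2 = 1 := inv_mul_cancel₀ (ne_of_gt hs2pos)
  have hq1 : q < 1 := by nlinarith
  have hlog2pos : 0 < Real.log 2 := Real.log_pos one_lt_two
  set M : ℝ := (2 * r / (Real.exp 1 * Real.log 2)) ^ r with hM
  have hMpos : 0 < M := by
    apply Real.rpow_pos_of_pos
    positivity
  have hnpos : (0:ℝ) < n := by exact_mod_cast Nat.pos_of_ne_zero hn0
  have key : ∀ k ∈ Finset.range (m+1),
      (2 : ℝ) ^ k * (Real.log (Real.exp 1 * n / 2 ^ k)) ^ r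
        ≤ (2 * n * ((2:ℝ)^r * M)) * q ^ (m - k + 1) := by
    intro k hk
    rw [Finset.mem_range] at hk
    have hkm : k ≤ m := by omega
    set i : ℕ := m - k + 1 with hi
    have hi1 : 1 ≤ i := by omega
    have hicast : (i:ℝ) = (m:ℝ) - k + 1 := by
      rw [hi]; push_cast [Nat.cast_sub hkm]; ring
    have h2k : (2:ℝ)^k ≤ n := by
      calc (2:ℝ)^k ≤ (2:ℝ)^m := pow_le_pow_right₀ one_le_two hkm
        _ ≤ n := by exact_mod_cast h2m
    have harg1 : (1:ℝ) ≤ Real.exp 1 * n / 2^k := by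
      have he1 : (1:ℝ) ≤ Real.exp 1 := Real.one_le_exp zero_le_one
      rw [le_div_iff₀ (by positivity)]
      nlinarith [pow_pos (two_pos (α := ℝ)) k]
    have hL0 : 0 ≤ Real.log (Real.exp 1 * n / 2^k) := Real.log_nonneg harg1
    have hlog2lt : Real.log 2 < 1 := by
      have := Real.log_two_lt_d9; linarith
    have hL : Real.log (Real.exp 1 * n / 2^k) ≤ 2 * i := by
      have hlogsplit : Real.log (Real.exp 1 * n / 2^k)
          = 1 + Real.log n - k * Real.log 2 := by
        rw [Real.log_div (by positivity) (by positivity),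
            Real.log_mul (Real.exp_pos 1).ne' (ne_of_gt hnpos), Real.log_exp,
            Real.log_pow]
      have hlogn : Real.log n ≤ ((m:ℝ)+1) * Real.log 2 := by
        calc Real.log n ≤ Real.log ((2:ℝ)^(m+1)) := by
              apply Real.log_le_log hnpos
              exact_mod_cast hn2m.le
          _ = ((m:ℝ)+1) * Real.log 2 := by rw [Real.log_pow]; push_cast; ring
      rw [hlogsplit]
      have hkmr : (k:ℝ) ≤ m := by exact_mod_cast hkm
      have h2 : ((m:ℝ) + 1 - k) * Real.log 2 ≤ (m:ℝ) + 1 - k := by nlinarith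
      rw [hicast]
      nlinarith
    have hpow : (Real.log (Real.exp 1 * n / 2^k)) ^ r ≤ (2 * (i:ℝ)) ^ r :=
      Real.rpow_le_rpow hL0 hL hr0.le
    have hsplit : (2 * (i:ℝ)) ^ r = 2^r * (i:ℝ)^r :=
      Real.mul_rpow two_pos.le (Nat.cast_nonneg i)
    have hir : (i:ℝ)^r ≤ M * Real.sqrt 2 ^ i := aux1 r hr0 i hi1
    have hqq : q / Real.sqrt 2 = 2⁻¹ := by
      rw [hq, division_def, ← mul_inv, hs2]
    have h2k2 : (2:ℝ)^k ≤ 2 * n * q ^ i / Real.sqrt 2 ^ i := by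
      have heq : 2 * (n:ℝ) * q ^ i / Real.sqrt 2 ^ i = 2 * n * (2⁻¹)^i := by
        rw [mul_div_assoc, ← div_pow, hqq]
      rw [heq, inv_pow, ← div_eq_mul_inv, le_div_iff₀ (pow_pos two_pos i)]
      have h1 : (2:ℝ)^k * 2^i = 2 * 2^m := by
        rw [← pow_add, show k + i = m + 1 by omega, pow_succ]; ring
      have h2 : (2:ℝ)^m ≤ n := by exact_mod_cast h2m
      rw [h1]; linarith
    calc (2 : ℝ) ^ k * (Real.log (Real.exp 1 * n / 2 ^ k)) ^ r
        ≤ (2 : ℝ) ^ k * (2^r * (i:ℝ)^r) := by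
          rw [← hsplit]
          exact mul_le_mul_of_nonneg_left hpow (by positivity)
      _ ≤ (2 * n * q ^ i / Real.sqrt 2 ^ i) * (2^r * (M * Real.sqrt 2 ^ i)) := by
          apply mul_le_mul h2k2
          · exact mul_le_mul_of_nonneg_left hir (by positivity)
          · positivity
          · have : (0:ℝ) ≤ 2 * n * q^i / Real.sqrt 2 ^ i := by positivity
            exact this
      _ = (2 * n * ((2:ℝ)^r * M)) * q ^ i := by
          have hne : Real.sqrt 2 ^ i ≠ 0 := by positivity
          field_simp
  have hgeom : ∑ k ∈ Finset.range (m+1), q ^ (m - k + 1) ≤ 5/2 := by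
    have hre : ∑ k ∈ Finset.range (m+1), q ^ (m - k + 1)
        = ∑ k ∈ Finset.range (m+1), q ^ (k + 1) := by
      rw [← Finset.sum_range_reflect]
      apply Finset.sum_congr rfl
      intro k hk
      rw [Finset.mem_range] at hk
      congr 2
      omega
    have h1q : 0 < 1 - q := by linarith
    have h2 : ∑ k ∈ Finset.range (m+1), q ^ k ≤ (1 - q)⁻¹ := by
      rw [geom_sum_eq (ne_of_lt hq1) (m+1)]
      have e1 : (q^(m+1) - 1)/(q - 1) = (1 - q^(m+1))/(1 - q) := by
        rw [div_eq_div_iff (by linarith) (by linarith)]; ring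
      rw [e1, ← one_div]
      have hnum : 1 - q^(m+1) ≤ 1 := by nlinarith [pow_nonneg hq0.le (m+1)]
      exact div_le_div₀ (by norm_num) hnum h1q le_rfl
    have h3 : ∑ k ∈ Finset.range (m+1), q ^ (k+1)
        = q * ∑ k ∈ Finset.range (m+1), q ^ k := by
      rw [Finset.mul_sum]
      exact Finset.sum_congr rfl fun k _ => by rw [pow_succ]; ring
    have hq25 : q * (1 - q)⁻¹ ≤ 5/2 := by
      rw [← div_eq_mul_inv, div_le_iff₀ h1q]
      nlinarith
    rw [hre, h3]
    calc q * ∑ k ∈ Finset.range (m+1), q^k ≤ q * (1-q)⁻¹ :=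
          mul_le_mul_of_nonneg_left h2 hq0.le
      _ ≤ 5/2 := hq25
  have hE : (1.72:ℝ) < Real.exp 1 * Real.log 2 := by
    have he : (2.7:ℝ) < Real.exp 1 := by linarith [Real.exp_one_gt_d9]
    have hl : (0.69:ℝ) < Real.log 2 := by linarith [Real.log_two_gt_d9]
    nlinarith
  have hfinal : 5 * ((2:ℝ)^r * M) ≤ (7*r)^r := by
    have hEpos : (0:ℝ) < Real.exp 1 * Real.log 2 := by positivity
    set E := Real.exp 1 * Real.log 2 with hEdef
    have hcomb : (2:ℝ)^r * M = (4*r/E)^r := by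
      rw [hM, ← Real.mul_rpow two_pos.le (by positivity)]
      congr 1
      field_simp; ring
    have hsplit7 : ((7:ℝ)*r)^r = (7*E/4)^r * (4*r/E)^r := by
      rw [← Real.mul_rpow (by positivity) (by positivity)]
      congr 1
      field_simp
    rw [hcomb, hsplit7]
    have h5 : (5:ℝ) ≤ (7*E/4)^r := by
      have h3 : (3:ℝ) ≤ 7*E/4 := by linarith
      calc (5:ℝ) ≤ 9 := by norm_num
        _ = (3:ℝ)^(2:ℝ) := by
            rw [show (2:ℝ) = ((2:ℕ):ℝ) by norm_num, Real.rpow_natCast]; norm_num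
        _ ≤ (3:ℝ)^r := Real.rpow_le_rpow_of_exponent_le (by norm_num) hr.le
        _ ≤ (7*E/4)^r := Real.rpow_le_rpow (by norm_num) h3 hr0.le
    have hpos : (0:ℝ) ≤ (4*r/E)^r := Real.rpow_nonneg (by positivity) r
    nlinarith
  calc ∑ k ∈ Finset.range (m + 1),
        (2 : ℝ) ^ k * (Real.log (Real.exp 1 * n / 2 ^ k)) ^ r
      ≤ ∑ k ∈ Finset.range (m+1), (2 * n * ((2:ℝ)^r * M)) * q ^ (m - k + 1) :=
        Finset.sum_le_sum key
    _ = (2 * n * ((2:ℝ)^r * M)) * ∑ k ∈ Finset.range (m+1), q ^ (m - k + 1) := by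
        rw [← Finset.mul_sum]
    _ ≤ (2 * n * ((2:ℝ)^r * M)) * (5/2) := by
        apply mul_le_mul_of_nonneg_left hgeom
        positivity
    _ = (5 * ((2:ℝ)^r * M)) * n := by ring
    _ ≤ (7*r)^r * n := mul_le_mul_of_nonneg_right hfinal hnpos.le
end

section
/- Let $X$ be an $n$-dimensional random vector whose coordinates each have mean zero and variance one, and suppose $X$ satisfies the exponential concentration inequality with constant $\alpha \geq 1$: for every Borel set $A$ with $\mathbb{P}(X \in A) \geq 1/2$ and every $t > 0$, $\mathbb{P}(X \in A + \alpha t B_2^n) \geq 1 - e^{-t}$. Then for every $1 \leq k \leq n$, $\mathbb{P}(X_k^* \geq t) \leq \exp(-\sqrt{k}\, t/(3\alpha))$ for all $t \geq 8\alpha \log(en/k)$. -/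
open MeasureTheory

open Finset in
lemma count_ge_of_orderStat {n k : ℕ} (x : Fin n → ℝ) (hk1 : 1 ≤ k) (hkn : k ≤ n) {t : ℝ}
    (h : t ≤ orderStat x k) :
    k ≤ (Finset.univ.filter fun i => t ≤ |x i|).card := by
  classical
  set m : Multiset ℝ := Finset.univ.val.map fun i : Fin n => |x i| with hm
  set l : List ℝ := m.sort (· ≤ ·) with hl
  have hlen : l.length = n := by simp [hl, hm]
  have hsort : l.Pairwise (· ≤ ·) := Multiset.pairwise_sort (s := m) (r := (· ≤ ·))
  have hnk : n - k < l.length := by omega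
  have hget : t ≤ l[n - k] := by
    rw [orderStat, ← hm, ← hl, List.getD_eq_getElem l 0 hnk] at h
    exact h
  have hdroplen : (l.drop (n - k)).length = k := by
    rw [List.length_drop, hlen]; omega
  have hall : ∀ y ∈ l.drop (n - k), t ≤ y := by
    intro y hy
    obtain ⟨j, hj, rfl⟩ := List.getElem_of_mem hy
    have hj' : j < k := hdroplen ▸ hj
    have hidx : n - k + j < l.length := by omega
    rw [List.getElem_drop]
    refine hget.trans ?_
    have := hsort.rel_get_of_le (a := ⟨n - k, hnk⟩) (b := ⟨n - k + j, hidx⟩)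
      (by simp [Fin.le_def])
    simpa using this
  have hfil : ((l.drop (n - k)).filter fun y => decide (t ≤ y)) = l.drop (n - k) :=
    List.filter_eq_self.mpr (fun a ha => decide_eq_true (hall a ha))
  have hsub : ((l.drop (n - k)).filter fun y => decide (t ≤ y)).length
      ≤ (l.filter fun y => decide (t ≤ y)).length :=
    ((List.drop_sublist _ _).filter _).length_le
  have hlenfil : (l.filter fun y => decide (t ≤ y)).length
      = (Finset.univ.filter fun i => t ≤ |x i|).card := by
    have h1 : ((l.filter fun y => decide (t ≤ y) : List ℝ) : Multiset ℝ)
        = m.filter fun y => t ≤ y := by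
      rw [← Multiset.sort_eq (s := m) (r := (· ≤ ·)), ← hl]
      simp [Multiset.filter_coe]
    have h2 : (l.filter fun y => decide (t ≤ y)).length
        = Multiset.card (m.filter fun y => t ≤ y) := by
      rw [← h1, Multiset.coe_card]
    rw [h2, hm, Multiset.filter_map, Multiset.card_map]
    rfl
  have hfl := congrArg List.length hfil
  omega

lemma coord_le_norm {n : ℕ} (y : EuclideanSpace ℝ (Fin n)) (i : Fin n) : |y i| ≤ ‖y‖ := by
  rw [EuclideanSpace.norm_eq]
  refine Real.le_sqrt_of_sq_le ?_
  have h1 : |y i| ^ 2 = ‖y i‖ ^ 2 := by rw [Real.norm_eq_abs]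
  have h2 : ‖y i‖ ^ 2 ≤ ∑ j : Fin n, ‖y j‖ ^ 2 :=
    Finset.single_le_sum (f := fun j => ‖y j‖ ^ 2) (fun j _ => sq_nonneg _) (Finset.mem_univ i)
  linarith

lemma isOpen_countSet {n : ℕ} (s r : ℝ) :
    IsOpen {x : EuclideanSpace ℝ (Fin n) |
      ((Finset.univ.filter fun i => s ≤ |x i|).card : ℝ) < r} := by
  classical
  rw [Metric.isOpen_iff]
  intro x hx
  simp only [Set.mem_setOf_eq] at hx
  by_cases hG : (Finset.univ.filter fun i : Fin n => |x i| < s).Nonempty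
  · obtain ⟨i0, hi0, hmin⟩ :=
      Finset.exists_min_image _ (fun i => s - |x i|) hG
    have hi0' : |x i0| < s := (Finset.mem_filter.mp hi0).2
    refine ⟨s - |x i0|, by linarith, fun y hy => ?_⟩
    simp only [Set.mem_setOf_eq]
    have hsub : (Finset.univ.filter fun i => s ≤ |y i|)
        ⊆ Finset.univ.filter fun i => s ≤ |x i| := by
      intro i hi
      have hyi : s ≤ |y i| := (Finset.mem_filter.mp hi).2
      simp only [Finset.mem_filter, Finset.mem_univ, true_and]
      by_contra hxi
      push_neg at hxi
      have hiG : i ∈ Finset.univ.filter fun i : Fin n => |x i| < s := by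
        simp [hxi]
      have hle := hmin i hiG
      have hd : |y i - x i| ≤ ‖y - x‖ := by
        have := coord_le_norm (y - x) i
        simpa using this
      have hxy : ‖y - x‖ < s - |x i0| := by
        rw [← dist_eq_norm]; exact hy
      have : |y i| < s := by
        calc |y i| ≤ |x i| + |y i - x i| := by
              have := abs_sub_abs_le_abs_sub (y i) (x i); linarith [abs_sub_comm (y i) (x i)]
          _ < |x i| + (s - |x i0|) := by linarith
          _ ≤ |x i| + (s - |x i|) := by linarith
          _ = s := by ring
      linarith
    calc ((Finset.univ.filter fun i => s ≤ |y i|).card : ℝ)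
        ≤ ((Finset.univ.filter fun i => s ≤ |x i|).card : ℝ) := by
          exact_mod_cast Finset.card_le_card hsub
      _ < r := hx
  · refine ⟨1, one_pos, fun y _ => ?_⟩
    simp only [Set.mem_setOf_eq]
    have hall : (Finset.univ.filter fun i => s ≤ |x i|) = Finset.univ := by
      rw [Finset.filter_eq_self]
      intro i _
      by_contra hxi
      exact hG ⟨i, by simp [lt_of_not_ge hxi]⟩
    calc ((Finset.univ.filter fun i => s ≤ |y i|).card : ℝ)
        ≤ ((Finset.univ : Finset (Fin n)).card : ℝ) := by
          exact_mod_cast Finset.card_le_card (Finset.filter_subset _ _)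
      _ = ((Finset.univ.filter fun i => s ≤ |x i|).card : ℝ) := by rw [hall]
      _ < r := hx

lemma isOpen_thicken {E : Type*} [SeminormedAddCommGroup E] {A : Set E} (hA : IsOpen A) (c : ℝ) :
    IsOpen {x | ∃ a ∈ A, ‖x - a‖ ≤ c} := by
  rw [Metric.isOpen_iff]
  rintro x ⟨a, ha, hac⟩
  obtain ⟨δ, hδ, hball⟩ := Metric.isOpen_iff.mp hA a ha
  refine ⟨δ, hδ, fun y hy => ⟨a + (y - x), ?_, ?_⟩⟩
  · apply hball
    rw [Metric.mem_ball, dist_eq_norm]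
    have h1 : a + (y - x) - a = y - x := by abel
    rw [h1, ← dist_eq_norm]
    exact hy
  · have h2 : y - (a + (y - x)) = x - a := by abel
    rw [h2]
    exact hac

lemma exp_calc {α L n k : ℝ} (hα : 1 ≤ α) (hL1 : 1 ≤ L)
    (hexpL : Real.exp L = Real.exp 1 * n / k) (hk0 : 0 < k) (hkn : k ≤ n) :
    n * Real.exp (-((4*α*L - 2)/α)) ≤ k/2 * (1/2) := by
  have hα0 : (0:ℝ) < α := by linarith
  have hn0 : (0:ℝ) < n := by linarith
  have h1 : -((4*α*L - 2)/α) ≤ 2 - 4*L := by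
    rw [← neg_div, div_le_iff₀ hα0]
    nlinarith
  have h2 : Real.exp (-((4*α*L - 2)/α)) ≤ Real.exp (2 - 4*L) := Real.exp_le_exp.mpr h1
  have h4L : Real.exp L ^ 4 = Real.exp (4 * L) := by
    rw [show (4:ℝ) * L = ((4:ℕ):ℝ) * L by norm_num, Real.exp_nat_mul]
  have hELpos : (0:ℝ) < Real.exp L := Real.exp_pos L
  have h3 : Real.exp (2 - 4*L) * Real.exp L ^ 4 = Real.exp 1 ^ 2 := by
    rw [h4L, ← Real.exp_add, show 2 - 4*L + 4*L = 1 + 1 by ring, Real.exp_add]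
    ring
  have hE1 : (2.7182818283 : ℝ) < Real.exp 1 := Real.exp_one_gt_d9
  have hEpos : (0:ℝ) < Real.exp (2 - 4*L) := Real.exp_pos _
  have hek : Real.exp L * k = Real.exp 1 * n := by
    rw [hexpL]; field_simp
  have hPk : Real.exp L^4 * k^4 = Real.exp 1^4 * n^4 := by
    rw [← mul_pow, hek, mul_pow]
  have key2 : Real.exp (2-4*L) * (Real.exp 1^4 * n^4) = Real.exp 1^2 * k^4 := by
    calc Real.exp (2-4*L) * (Real.exp 1^4 * n^4)
        = (Real.exp (2-4*L) * Real.exp L^4) * k^4 := by rw [← hPk]; ring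
      _ = Real.exp 1^2 * k^4 := by rw [h3]
  have hE2 : (4:ℝ) ≤ Real.exp 1^2 := by nlinarith
  have hk3n : k^3*n ≤ n^4 := by nlinarith [pow_le_pow_left₀ hk0.le hkn 3, pow_pos hn0 3]
  have h7 : 4 * Real.exp 1^2 * (k^3*n) ≤ Real.exp 1^2 * Real.exp 1^2 * n^4 := by
    calc 4 * Real.exp 1^2 * (k^3*n) ≤ Real.exp 1^2 * Real.exp 1^2 * (k^3*n) := by
          nlinarith [mul_nonneg (mul_nonneg (pow_pos hk0 3).le hn0.le) (sq_nonneg (Real.exp 1))]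
      _ ≤ Real.exp 1^2 * Real.exp 1^2 * n^4 := by
          nlinarith [sq_nonneg (Real.exp 1), sq_nonneg (Real.exp 1 ^ 2)]
  -- goal after reduction: exp(2-4L) * (4*n) ≤ k
  have h6 : Real.exp (2 - 4*L) * (4*n) ≤ k := by
    have hpos : (0:ℝ) < Real.exp 1^4 * n^4 := by positivity
    rw [← mul_le_mul_iff_of_pos_right hpos]
    calc Real.exp (2-4*L) * (4*n) * (Real.exp 1^4 * n^4)
        = 4*n * (Real.exp (2-4*L) * (Real.exp 1^4 * n^4)) := by ring
      _ = 4*n * (Real.exp 1^2 * k^4) := by rw [key2]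
      _ = k * (4 * Real.exp 1^2 * (k^3*n)) := by ring
      _ ≤ k * (Real.exp 1^2 * Real.exp 1^2 * n^4) := by
          exact mul_le_mul_of_nonneg_left h7 hk0.le
      _ = k * (Real.exp 1^4 * n^4) := by ring
  nlinarith [mul_le_mul_of_nonneg_left h2 hn0.le]


lemma toReal_compl_prob {Ω : Type*} [MeasurableSpace Ω] (μ : Measure Ω) [IsProbabilityMeasure μ]
    {S : Set Ω} (hS : MeasurableSet S) : (μ Sᶜ).toReal = 1 - (μ S).toReal := by
  have h := measure_add_measure_compl (μ := μ) hS
  have h2 := congrArg ENNReal.toReal h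
  rw [ENNReal.toReal_add (measure_ne_top μ _) (measure_ne_top μ _)] at h2
  simp at h2
  linarith

set_option maxHeartbeats 2000000 in
/-- If the coordinates of `X` have mean zero and variance one and `X` satisfies
exponential concentration with constant `α ≥ 1` (w.r.t. the Euclidean norm), then
`P(X_k^* ≥ t) ≤ exp(-√k t/(3α))` for `t ≥ 8α log(en/k)`. -/
theorem stmt11 {Ω : Type*} [MeasurableSpace Ω] (μ : Measure Ω) [IsProbabilityMeasure μ]
    {n : ℕ} (hn : 1 ≤ n) (X : Ω → EuclideanSpace ℝ (Fin n)) (hX : Measurable X)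
    (hmean : ∀ i : Fin n, ∫ ω, X ω i ∂μ = 0)
    (hvar : ∀ i : Fin n, ∫ ω, (X ω i) ^ 2 ∂μ = 1)
    (α : ℝ) (hα : 1 ≤ α)
    (hconc : ∀ A : Set (EuclideanSpace ℝ (Fin n)), MeasurableSet A →
      (1 : ℝ) / 2 ≤ (μ (X ⁻¹' A)).toReal → ∀ t : ℝ, 0 < t →
        1 - Real.exp (-t) ≤ (μ (X ⁻¹' {x | ∃ a ∈ A, ‖x - a‖ ≤ α * t})).toReal)
    (k : ℕ) (hk1 : 1 ≤ k) (hkn : k ≤ n) :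
    ∀ t : ℝ, 8 * α * Real.log (Real.exp 1 * n / k) ≤ t →
      μ {ω | t ≤ orderStat (fun i => X ω i) k}
        ≤ ENNReal.ofReal (Real.exp (-(Real.sqrt k * t) / (3 * α))) := by

  classical
  intro t ht
  have hα0 : (0:ℝ) < α := by linarith
  have hn0 : (0:ℝ) < n := by exact_mod_cast hn
  have hk0 : (0:ℝ) < k := by exact_mod_cast hk1
  have hkn' : (k:ℝ) ≤ n := by exact_mod_cast hkn
  set L := Real.log (Real.exp 1 * n / k) with hLdef
  have hL1 : 1 ≤ L := by
    have h1 : Real.exp 1 ≤ Real.exp 1 * n / k := by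
      rw [le_div_iff₀ hk0]
      nlinarith [Real.exp_pos 1]
    calc (1:ℝ) = Real.log (Real.exp 1) := (Real.log_exp 1).symm
      _ ≤ L := Real.log_le_log (Real.exp_pos 1) h1
  set s := 4 * α * L with hsdef
  have hs4 : 4 ≤ s := by nlinarith
  have hst : 2 * s ≤ t := by rw [hsdef]; nlinarith
  have htpos : (0:ℝ) < t := by linarith
  have hXi : ∀ i : Fin n, Measurable fun ω => X ω i :=
    fun i => (measurable_pi_apply i).comp ((WithLp.measurable_ofLp 2 _).comp hX)
  -- Step A: coordinate tails
  set u₀ : ℝ := (s - 2)/α with hu0def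
  have hu0pos : 0 < u₀ := div_pos (by linarith) hα0
  have htail : ∀ i : Fin n, (μ {ω | s ≤ |X ω i|}).toReal ≤ Real.exp (-u₀) := by
    intro i
    -- Chebyshev
    have hcheb : (μ {ω | 2 ≤ |X ω i|}).toReal ≤ 1/4 := by
      have hint : Integrable (fun ω => (X ω i)^2) μ := by
        by_contra hni
        have h := hvar i
        rw [integral_undef hni] at h
        norm_num at h
      have hmarkov := mul_meas_ge_le_integral_of_nonneg
        (ae_of_all μ fun ω => sq_nonneg (X ω i)) hint 4
      rw [hvar i] at hmarkov
      have hsubset : {ω | 2 ≤ |X ω i|} ⊆ {ω | 4 ≤ (X ω i)^2} := by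
        intro ω hω
        simp only [Set.mem_setOf_eq] at *
        nlinarith [sq_abs (X ω i)]
      have hmono := ENNReal.toReal_mono (measure_ne_top μ _) (measure_mono hsubset)
      linarith [ENNReal.toReal_nonneg (a := μ {ω | 4 ≤ (X ω i)^2}),
        show μ.real {ω | 4 ≤ (X ω i)^2} = (μ {ω | 4 ≤ (X ω i)^2}).toReal from rfl]
    set Ai : Set (EuclideanSpace ℝ (Fin n)) := {x | |x i| < 2} with hAidef
    have hAiopen : IsOpen Ai := by
      have hc : Continuous fun x : EuclideanSpace ℝ (Fin n) => |x i| :=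
        continuous_abs.comp ((EuclideanSpace.proj i : EuclideanSpace ℝ (Fin n) →L[ℝ] ℝ).continuous)
      exact isOpen_Iio.preimage hc
    have hmeas2 : MeasurableSet {ω | 2 ≤ |X ω i|} :=
      measurableSet_le measurable_const (hXi i).abs
    have hprei : X ⁻¹' Ai = {ω | 2 ≤ |X ω i|}ᶜ := by
      ext ω
      simp [hAidef, not_le]
    have hAiprob : (1:ℝ)/2 ≤ (μ (X ⁻¹' Ai)).toReal := by
      rw [hprei, toReal_compl_prob μ hmeas2]
      linarith
    have hc := hconc Ai hAiopen.measurableSet hAiprob u₀ hu0pos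
    set Ti : Set (EuclideanSpace ℝ (Fin n)) := {x | ∃ a ∈ Ai, ‖x - a‖ ≤ α * u₀} with hTidef
    have hTiopen : IsOpen Ti := isOpen_thicken hAiopen _
    have hsub : {ω | s ≤ |X ω i|} ⊆ (X ⁻¹' Ti)ᶜ := by
      intro ω hω hmem
      obtain ⟨a, ha, hna⟩ := hmem
      have hai : |a i| < 2 := ha
      have hci : |X ω i - a i| ≤ ‖X ω - a‖ := by
        have := coord_le_norm (X ω - a) i
        simpa using this
      have h1 : |X ω i| ≤ |a i| + |X ω i - a i| := by
        have := abs_sub_abs_le_abs_sub (X ω i) (a i)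
        linarith
      have h2 : α * u₀ = s - 2 := by
        rw [hu0def]; field_simp
      have h4 : ‖X ω - a‖ ≤ s - 2 := h2 ▸ hna
      have hsω : s ≤ |X ω i| := hω
      linarith
    have hm := measure_mono (μ := μ) hsub
    have hcompl : (μ ((X ⁻¹' Ti)ᶜ)).toReal = 1 - (μ (X ⁻¹' Ti)).toReal :=
      toReal_compl_prob μ (hTiopen.measurableSet.preimage hX)
    have := ENNReal.toReal_mono (measure_ne_top μ _) hm
    rw [hcompl] at this
    linarith
  -- Step B: the set A has probability ≥ 1/2
  set A : Set (EuclideanSpace ℝ (Fin n)) :=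
    {x | ((Finset.univ.filter fun i => s ≤ |x i|).card : ℝ) < k/2} with hAdef
  have hAopen : IsOpen A := isOpen_countSet s (k/2)
  set f : Ω → ENNReal := fun ω => ∑ i : Fin n, if s ≤ |X ω i| then 1 else 0 with hfdef
  have hfmeas : Measurable f := by
    apply Finset.measurable_sum
    intro i _
    exact Measurable.ite (measurableSet_le measurable_const (hXi i).abs)
      measurable_const measurable_const
  have hfcard : ∀ ω, f ω
      = ((Finset.univ.filter fun i => s ≤ |X ω i|).card : ENNReal) := by
    intro ω
    rw [hfdef]
    simp only [Finset.card_filter]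
    push_cast
    rfl

  have hlint : ∫⁻ ω, f ω ∂μ = ∑ i : Fin n, μ {ω | s ≤ |X ω i|} := by
    rw [hfdef]
    rw [lintegral_finset_sum _ (fun i _ => Measurable.ite
      (measurableSet_le measurable_const (hXi i).abs) measurable_const measurable_const)]
    refine Finset.sum_congr rfl fun i _ => ?_
    rw [← lintegral_indicator_one (measurableSet_le measurable_const (hXi i).abs)]
    congr 1
  -- ∑ μ_i ≤ n * exp(-u₀)  and  n * exp(-u₀) ≤ k/4
  have hexp_bound : (n:ℝ) * Real.exp (-u₀) ≤ (k:ℝ)/2 * (1/2) := by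
    have hexpL : Real.exp L = Real.exp 1 * n / k := Real.exp_log (by positivity)
    have h := exp_calc hα hL1 hexpL hk0 hkn'
    rw [hu0def, hsdef]
    exact h
  set ε : ENNReal := ENNReal.ofReal ((k:ℝ)/2) with hεdef
  have hε0 : ε ≠ 0 := by
    rw [hεdef]
    exact (ENNReal.ofReal_pos.mpr (by positivity)).ne'
  have hεtop : ε ≠ ⊤ := ENNReal.ofReal_ne_top
  have hmark := mul_meas_ge_le_lintegral₀ hfmeas.aemeasurable (μ := μ) ε
  have hlintb : ∫⁻ ω, f ω ∂μ ≤ ε * ENNReal.ofReal (1/2) := by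
    rw [hlint]
    calc ∑ i : Fin n, μ {ω | s ≤ |X ω i|}
        ≤ ∑ _i : Fin n, ENNReal.ofReal (Real.exp (-u₀)) := by
          apply Finset.sum_le_sum
          intro i _
          have h1 := htail i
          have h2 : μ {ω | s ≤ |X ω i|} = ENNReal.ofReal ((μ {ω | s ≤ |X ω i|}).toReal) :=
            (ENNReal.ofReal_toReal (measure_ne_top μ _)).symm
          rw [h2]
          exact ENNReal.ofReal_le_ofReal h1
      _ = (n : ENNReal) * ENNReal.ofReal (Real.exp (-u₀)) := by
          simp [Finset.sum_const, nsmul_eq_mul]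
      _ ≤ ε * ENNReal.ofReal (1/2) := by
          rw [hεdef, ← ENNReal.ofReal_natCast n, ← ENNReal.ofReal_mul (by positivity),
            ← ENNReal.ofReal_mul (by positivity)]
          exact ENNReal.ofReal_le_ofReal hexp_bound
  have hbad : μ {ω | ε ≤ f ω} ≤ ENNReal.ofReal (1/2) := by
    have h := hmark.trans hlintb
    exact (ENNReal.mul_le_mul_iff_right hε0 hεtop).mp h
  have hbadset : {ω | ε ≤ f ω} = (X ⁻¹' A)ᶜ := by
    ext ω
    have h1 : f ω = ENNReal.ofReal ((Finset.univ.filter fun i => s ≤ |X ω i|).card : ℝ) := by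
      rw [hfcard ω, ENNReal.ofReal_natCast]
    simp only [Set.mem_setOf_eq, Set.mem_compl_iff, Set.mem_preimage, hAdef, not_lt]
    rw [h1, hεdef, ENNReal.ofReal_le_ofReal_iff (by positivity)]
  have hAmeas : MeasurableSet (X ⁻¹' A) := hAopen.measurableSet.preimage hX
  have hAprob : (1:ℝ)/2 ≤ (μ (X ⁻¹' A)).toReal := by
    have h1 : (μ ((X ⁻¹' A)ᶜ)).toReal ≤ 1/2 := by
      rw [← hbadset]
      have := ENNReal.toReal_mono ENNReal.ofReal_ne_top hbad
      rw [ENNReal.toReal_ofReal (by norm_num : (0:ℝ) ≤ 1/2)] at this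
      exact this
    have h2 := toReal_compl_prob μ hAmeas
    linarith
  -- Step C: final concentration
  set u : ℝ := Real.sqrt ((k:ℝ)/2) * (t - s) / α with hudef
  have hts : 0 < t - s := by linarith
  have hsqk2 : (0:ℝ) < Real.sqrt ((k:ℝ)/2) := Real.sqrt_pos.mpr (by positivity)
  have hupos : 0 < u := by
    rw [hudef]
    positivity
  have hc := hconc A hAopen.measurableSet hAprob u hupos
  set T : Set (EuclideanSpace ℝ (Fin n)) := {x | ∃ a ∈ A, ‖x - a‖ ≤ α * u} with hTdef
  have hTopen : IsOpen T := isOpen_thicken hAopen _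
  have hsub : {ω | t ≤ orderStat (fun i => X ω i) k} ⊆ (X ⁻¹' T)ᶜ := by
    intro ω hω hmem
    obtain ⟨a, ha, hna⟩ := hmem
    have hcount : k ≤ (Finset.univ.filter fun i => t ≤ |X ω i|).card := by
      have := count_ge_of_orderStat (fun i => X ω i) hk1 hkn hω
      simpa using this
    have hFa : ((Finset.univ.filter fun i => s ≤ |a i|).card : ℝ) < k/2 := ha
    -- bound on perturbation count
    have hnormsq : ∑ i : Fin n, (X ω i - a i)^2 ≤ ((k:ℝ)/2) * (t - s)^2 := by
      have h1 : ‖X ω - a‖^2 = ∑ i : Fin n, (X ω i - a i)^2 := by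
        rw [EuclideanSpace.norm_eq, Real.sq_sqrt (Finset.sum_nonneg fun j _ => sq_nonneg _)]
        refine Finset.sum_congr rfl fun i _ => ?_
        rw [Real.norm_eq_abs, sq_abs]
        rfl
      have h2 : ‖X ω - a‖^2 ≤ (α * u)^2 :=
        pow_le_pow_left₀ (norm_nonneg _) hna 2
      have h3 : (α * u)^2 = ((k:ℝ)/2) * (t - s)^2 := by
        rw [hudef]
        rw [mul_div_assoc, ← mul_assoc]
        rw [mul_pow, mul_pow, div_pow, Real.sq_sqrt (by positivity : (0:ℝ) ≤ (k:ℝ)/2)]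
        field_simp
      rw [h1, h3] at h2
      exact h2
    have hFb : ((Finset.univ.filter fun i => t - s ≤ |X ω i - a i|).card : ℝ) ≤ (k:ℝ)/2 := by
      set Fb := Finset.univ.filter fun i => t - s ≤ |X ω i - a i| with hFbdef
      have h1 : (Fb.card : ℝ) * (t - s)^2 ≤ ∑ i ∈ Fb, (X ω i - a i)^2 := by
        have : ∀ i ∈ Fb, (t - s)^2 ≤ (X ω i - a i)^2 := by
          intro i hi
          have h := (Finset.mem_filter.mp hi).2
          nlinarith [sq_abs (X ω i - a i), abs_nonneg (X ω i - a i)]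
        calc (Fb.card : ℝ) * (t - s)^2 = ∑ _i ∈ Fb, (t - s)^2 := by
              rw [Finset.sum_const, nsmul_eq_mul]
          _ ≤ ∑ i ∈ Fb, (X ω i - a i)^2 := Finset.sum_le_sum this
      have h2 : ∑ i ∈ Fb, (X ω i - a i)^2 ≤ ∑ i : Fin n, (X ω i - a i)^2 :=
        Finset.sum_le_sum_of_subset_of_nonneg (Finset.subset_univ Fb)
          (fun i _ _ => sq_nonneg _)
      have h3 : (Fb.card : ℝ) * (t - s)^2 ≤ ((k:ℝ)/2) * (t - s)^2 := by linarith
      have h4 : (0:ℝ) < (t - s)^2 := by positivity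
      exact le_of_mul_le_mul_right h3 h4
    have hunion : (Finset.univ.filter fun i => t ≤ |X ω i|)
        ⊆ (Finset.univ.filter fun i => s ≤ |a i|)
          ∪ (Finset.univ.filter fun i => t - s ≤ |X ω i - a i|) := by
      intro i hi
      have hti : t ≤ |X ω i| := (Finset.mem_filter.mp hi).2
      rw [Finset.mem_union, Finset.mem_filter, Finset.mem_filter]
      by_contra hcon
      push_neg at hcon
      obtain ⟨hc1, hc2⟩ := hcon
      have hc1' := hc1 (Finset.mem_univ i)
      have hc2' := hc2 (Finset.mem_univ i)
      have := abs_sub_abs_le_abs_sub (X ω i) (a i)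
      linarith
    have hcards : ((Finset.univ.filter fun i => t ≤ |X ω i|).card : ℝ)
        ≤ ((Finset.univ.filter fun i => s ≤ |a i|).card : ℝ)
          + ((Finset.univ.filter fun i => t - s ≤ |X ω i - a i|).card : ℝ) := by
      have h1 := Finset.card_le_card hunion
      have h2 := Finset.card_union_le (Finset.univ.filter fun i => s ≤ |a i|)
        (Finset.univ.filter fun i => t - s ≤ |X ω i - a i|)
      exact_mod_cast h1.trans h2
    have hklecard : (k:ℝ) ≤ ((Finset.univ.filter fun i => t ≤ |X ω i|).card : ℝ) := by
      exact_mod_cast hcount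
    linarith
  -- conclude
  have hm := measure_mono (μ := μ) hsub
  have hTmeas : MeasurableSet (X ⁻¹' T) := hTopen.measurableSet.preimage hX
  have hcompl : (μ ((X ⁻¹' T)ᶜ)).toReal ≤ Real.exp (-u) := by
    rw [toReal_compl_prob μ hTmeas]
    linarith
  have hfinal : μ ((X ⁻¹' T)ᶜ) ≤ ENNReal.ofReal (Real.exp (-u)) := by
    rw [← ENNReal.ofReal_toReal (measure_ne_top μ ((X ⁻¹' T)ᶜ))]
    exact ENNReal.ofReal_le_ofReal hcompl
  refine hm.trans (hfinal.trans (ENNReal.ofReal_le_ofReal (Real.exp_le_exp.mpr ?_)))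
  -- -u ≤ -(√k t)/(3α)  i.e.  √k t/(3α) ≤ u
  rw [neg_div, neg_le_neg_iff]
  have ha2 : Real.sqrt (k:ℝ) ^ 2 = (k:ℝ) := Real.sq_sqrt (by positivity)
  have hb2 : Real.sqrt ((k:ℝ)/2) ^ 2 = (k:ℝ)/2 := Real.sq_sqrt (by positivity)
  have ha0 : 0 ≤ Real.sqrt (k:ℝ) := Real.sqrt_nonneg _
  have hb0 : 0 ≤ Real.sqrt ((k:ℝ)/2) := Real.sqrt_nonneg _
  have hab : 2 * Real.sqrt (k:ℝ) ≤ 3 * Real.sqrt ((k:ℝ)/2) := by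
    nlinarith [sq_nonneg (2 * Real.sqrt (k:ℝ) - 3 * Real.sqrt ((k:ℝ)/2))]
  rw [hudef, div_le_div_iff₀ (by positivity) hα0]
  have hts2 : t/2 ≤ t - s := by linarith
  have hint1 : 2*Real.sqrt (k:ℝ) * (t/2*α) ≤ 3*Real.sqrt ((k:ℝ)/2) * (t/2*α) :=
    mul_le_mul_of_nonneg_right hab (by positivity)
  have hint2 : 3*Real.sqrt ((k:ℝ)/2)*α * (t/2) ≤ 3*Real.sqrt ((k:ℝ)/2)*α * (t-s) :=
    mul_le_mul_of_nonneg_left hts2 (by positivity)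
  nlinarith [hint1, hint2]
end
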